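/- Let $(X_n)$ be the minimal random walk with $q = 0$ and $1/2 < p < 1$, and let $M$ be the almost sure limit of $X_n/a_n - s$ where $a_n = \Gamma(n+p)/(\Gamma(n)\Gamma(1+p))$. Then $\mathbb{E}[M^2] = \frac{2s\,\Gamma(1+p)^2}{\Gamma(1+2p)} - s^2$. -/

import Mathlib

open MeasureTheory ProbabilityTheory Filter Real BoundedContinuousFunction

noncomputable section

/-- The minimal random walk of Kumar–Harbola–Lindenberg: increments `η n ∈ {0,1}`,
`P(η 1 = 1) = s`, and for `n ≥ 1` the conditional expectation (i.e. conditional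
probability of a forward step) given `σ(η 1, …, η n)` is `q + (p-q) X_n / n`,
where `X_n = ∑_{k=1}^n η k`. -/
structure IsMinimalRW {Ω : Type*} [MeasurableSpace Ω] (μ : Measure Ω)
    (p q s : ℝ) (η : ℕ → Ω → ℝ) : Prop where
  meas : ∀ n, Measurable (η n)
  zero : ∀ ω, η 0 ω = 0
  vals : ∀ n, 1 ≤ n → ∀ᵐ ω ∂μ, η n ω = 0 ∨ η n ω = 1
  init : (μ {ω | η 1 ω = 1}).toReal = s
  cond : ∀ n : ℕ, 1 ≤ n →
      μ[η (n + 1) | ⨆ i ∈ Finset.Icc 1 n, MeasurableSpace.comap (η i) inferInstance]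
        =ᵐ[μ] fun ω => q + (p - q) * (∑ k ∈ Finset.Icc 1 n, η k ω) / n

/-- The position of the walk, `X_n = ∑_{k=1}^n η_k`. -/
def walkPos {Ω : Type*} (η : ℕ → Ω → ℝ) (n : ℕ) (ω : Ω) : ℝ := ∑ k ∈ Finset.Icc 1 n, η k ω

/-- The normalizing sequence `a_n = Γ(n+α)/(Γ(n)Γ(1+α))`. -/
def aSeq (α : ℝ) (n : ℕ) : ℝ := Real.Gamma (n + α) / (Real.Gamma n * Real.Gamma (1 + α))

open Topology in
lemma gamma_prod_aux (a : ℝ) (ha : 0 < a) (n : ℕ) :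
    Real.Gamma (a + n) = Real.Gamma a * ∏ j ∈ Finset.range n, (a + j) := by
  induction n with
  | zero => simp
  | succ n ih =>
    have h1 : a + (n + 1 : ℕ) = (a + n) + 1 := by push_cast; ring
    rw [h1, Real.Gamma_add_one (by positivity), ih, Finset.prod_range_succ]
    ring

open Topology in
lemma gammaRatio_tendsto (a : ℝ) (ha : 0 < a) :
    Tendsto (fun n : ℕ => Real.Gamma (n + a) / (Real.Gamma n * (n:ℝ) ^ a)) atTop (𝓝 1) := by
  have key : ∀ n : ℕ, 1 ≤ n →
      Real.Gamma (n + a) / (Real.Gamma n * (n:ℝ) ^ a)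
        = Real.Gamma a * (n / (a + n)) / Real.GammaSeq a n := by
    intro n hn
    obtain ⟨m, rfl⟩ := Nat.exists_eq_add_of_le hn
    have hcast : ((1 + m : ℕ) : ℝ) = (m:ℝ) + 1 := by push_cast; ring
    have hG : Real.Gamma ((1 + m : ℕ) + a) = Real.Gamma a * ∏ j ∈ Finset.range (1 + m), (a + j) := by
      rw [add_comm ((1 + m : ℕ):ℝ) a]; exact gamma_prod_aux a ha (1 + m)
    have hGn : Real.Gamma ((1+m : ℕ):ℝ) = (Nat.factorial m : ℝ) := by
      rw [hcast]; exact_mod_cast Real.Gamma_nat_eq_factorial m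
    have hnpos : (0:ℝ) < ((1+m:ℕ):ℝ) := by positivity
    have hrp : (0:ℝ) < ((1+m:ℕ):ℝ) ^ a := Real.rpow_pos_of_pos hnpos a
    have hprod : 0 < ∏ j ∈ Finset.range (1 + m + 1), (a + j) :=
      Finset.prod_pos fun j _ => by positivity
    rw [hG, hGn, Real.GammaSeq]
    rw [Finset.prod_range_succ]
    have hfact : (Nat.factorial (1+m) : ℝ) = ((1+m:ℕ):ℝ) * (Nat.factorial m : ℝ) := by
      rw [add_comm 1 m]; exact_mod_cast Nat.factorial_succ m
    rw [hfact]
    have h1 : (0:ℝ) < (Nat.factorial m : ℝ) := by positivity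
    have h2 : 0 < ∏ j ∈ Finset.range (1 + m), (a + j) :=
      Finset.prod_pos fun j _ => by positivity
    have h3 : (0:ℝ) < a + ((1+m:ℕ):ℝ) := by positivity
    field_simp
  have h1 : Tendsto (fun n : ℕ => Real.Gamma a * ((n:ℝ) / (a + n)) / Real.GammaSeq a n) atTop
      (𝓝 (Real.Gamma a * 1 / Real.Gamma a)) := by
    refine Tendsto.div (Tendsto.const_mul _ ?_) (Real.GammaSeq_tendsto_Gamma a)
      (ne_of_gt (Real.Gamma_pos_of_pos ha))
    have := tendsto_natCast_div_add_atTop (𝕜 := ℝ) a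
    simpa [add_comm] using this
  have h2 : Real.Gamma a * 1 / Real.Gamma a = 1 := by
    have := Real.Gamma_pos_of_pos ha
    field_simp
  rw [h2] at h1
  refine Tendsto.congr' ?_ h1
  filter_upwards [eventually_ge_atTop 1] with n hn
  exact (key n hn).symm

lemma aSeq_one_eq {α : ℝ} (hα : 0 < α) : aSeq α 1 = 1 := by
  have h3 : 0 < Real.Gamma (1 + α) := Real.Gamma_pos_of_pos (by positivity)
  rw [aSeq]
  norm_num [Real.Gamma_one]
  exact ne_of_gt h3

lemma aSeq_pos {α : ℝ} (hα : 0 < α) {n : ℕ} (hn : 1 ≤ n) : 0 < aSeq α n := by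
  have hn' : (0:ℝ) < n := by exact_mod_cast hn
  have h1 : 0 < Real.Gamma ((n:ℝ) + α) := Real.Gamma_pos_of_pos (by positivity)
  have h2 : 0 < Real.Gamma (n:ℝ) := Real.Gamma_pos_of_pos hn'
  have h3 : 0 < Real.Gamma (1 + α) := Real.Gamma_pos_of_pos (by positivity)
  exact div_pos h1 (by positivity)

lemma aSeq_succ_eq {α : ℝ} (hα : 0 < α) {n : ℕ} (hn : 1 ≤ n) :
    aSeq α (n + 1) = aSeq α n * (((n:ℝ) + α) / n) := by
  have hn' : (0:ℝ) < n := by exact_mod_cast hn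
  have h1 : 0 < Real.Gamma ((n:ℝ) + α) := Real.Gamma_pos_of_pos (by positivity)
  have h2 : 0 < Real.Gamma (n:ℝ) := Real.Gamma_pos_of_pos hn'
  have h3 : 0 < Real.Gamma (1 + α) := Real.Gamma_pos_of_pos (by positivity)
  have e1 : ((n + 1 : ℕ) : ℝ) + α = ((n:ℝ) + α) + 1 := by push_cast; ring
  have e2 : ((n + 1 : ℕ) : ℝ) = (n:ℝ) + 1 := by push_cast; ring
  rw [aSeq, aSeq, e1, e2, Real.Gamma_add_one (by positivity),
    Real.Gamma_add_one (ne_of_gt hn')]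
  field_simp

lemma aSeq_eq_ratio {α : ℝ} (hα : 0 < α) {n : ℕ} (hn : 1 ≤ n) :
    aSeq α n = (Real.Gamma (n + α) / (Real.Gamma n * (n:ℝ) ^ α)) * (n:ℝ) ^ α
      / Real.Gamma (1 + α) := by
  have hn' : (0:ℝ) < n := by exact_mod_cast hn
  have hr : (0:ℝ) < (n:ℝ) ^ α := Real.rpow_pos_of_pos hn' α
  have h2 : 0 < Real.Gamma (n:ℝ) := Real.Gamma_pos_of_pos hn'
  rw [aSeq]
  field_simp

open Topology in
lemma tendsto_inv_aSeq {α : ℝ} (hα : 0 < α) :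
    Tendsto (fun n : ℕ => 1 / aSeq α n) atTop (𝓝 0) := by
  have hRn : Tendsto (fun n : ℕ => (Real.Gamma (n + α) / (Real.Gamma n * (n:ℝ) ^ α)) * (n:ℝ) ^ α)
      atTop atTop := by
    refine Tendsto.pos_mul_atTop one_pos (gammaRatio_tendsto α hα) ?_
    exact (tendsto_rpow_atTop hα).comp tendsto_natCast_atTop_atTop
  have h2 : Tendsto (fun n : ℕ =>
      Real.Gamma (1 + α) / ((Real.Gamma (n + α) / (Real.Gamma n * (n:ℝ) ^ α)) * (n:ℝ) ^ α))
      atTop (𝓝 0) := Tendsto.div_atTop (tendsto_const_nhds (x := Real.Gamma (1 + α))) hRn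
  refine Tendsto.congr' ?_ h2
  filter_upwards [eventually_ge_atTop 1] with n hn
  rw [aSeq_eq_ratio hα hn]
  rw [one_div_div]

open Topology in
lemma tendsto_ratio_aSeq {p : ℝ} (hp : 0 < p) :
    Tendsto (fun n : ℕ => aSeq (2*p) n / (aSeq p n)^2) atTop
      (𝓝 (Real.Gamma (1+p)^2 / Real.Gamma (1+2*p))) := by
  set R : ℝ → ℕ → ℝ := fun a n => Real.Gamma (n + a) / (Real.Gamma n * (n:ℝ) ^ a) with hR
  have key : ∀ n : ℕ, 1 ≤ n → aSeq (2*p) n / (aSeq p n)^2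
      = (Real.Gamma (1+p)^2 / Real.Gamma (1+2*p)) * (R (2*p) n / (R p n)^2) := by
    intro n hn
    have hn' : (0:ℝ) < n := by exact_mod_cast hn
    have hrp : (0:ℝ) < (n:ℝ) ^ p := Real.rpow_pos_of_pos hn' p
    have h3 : 0 < Real.Gamma (1 + p) := Real.Gamma_pos_of_pos (by positivity)
    have h4 : 0 < Real.Gamma (1 + 2*p) := Real.Gamma_pos_of_pos (by positivity)
    have hsq : (n:ℝ) ^ (2*p) = ((n:ℝ) ^ p)^2 := by
      rw [← Real.rpow_natCast ((n:ℝ)^p) 2, ← Real.rpow_mul (le_of_lt hn')]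
      norm_num [mul_comm]
    rw [aSeq_eq_ratio (by positivity : (0:ℝ) < 2*p) hn, aSeq_eq_ratio hp hn, hsq]
    have hRp : R p n ≠ 0 := by
      have h1 : 0 < Real.Gamma ((n:ℝ) + p) := Real.Gamma_pos_of_pos (by positivity)
      have h2 : 0 < Real.Gamma (n:ℝ) := Real.Gamma_pos_of_pos hn'
      exact ne_of_gt (div_pos h1 (by positivity))
    field_simp [hR]
    have hG : 0 < Real.Gamma (n:ℝ) := Real.Gamma_pos_of_pos hn'
    simp only [hR]
    rw [hsq]
    field_simp
  have h1 : Tendsto (fun n : ℕ => (Real.Gamma (1+p)^2 / Real.Gamma (1+2*p)) * (R (2*p) n / (R p n)^2))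
      atTop (𝓝 ((Real.Gamma (1+p)^2 / Real.Gamma (1+2*p)) * (1 / 1^2))) := by
    refine Tendsto.const_mul _ (Tendsto.div (gammaRatio_tendsto _ (by positivity)) ?_ (by norm_num))
    exact (gammaRatio_tendsto p hp).pow 2
  norm_num at h1
  refine Tendsto.congr' ?_ h1
  filter_upwards [eventually_ge_atTop 1] with n hn
  exact (key n hn).symm

set_option maxHeartbeats 2000000 in
/-- Second moment of the limit `M` of `X_n/a_n - s` for `q = 0`, `1/2 < p < 1`. -/
theorem minimalRW_q0_limit_second_moment {Ω : Type*} [MeasurableSpace Ω] (μ : Measure Ω)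
    [IsProbabilityMeasure μ] (p s : ℝ) (hp0 : 1 / 2 < p) (hp1 : p < 1)
    (hs : s ∈ Set.Icc (0:ℝ) 1) (η : ℕ → Ω → ℝ) (hrw : IsMinimalRW μ p 0 s η)
    (M : Ω → ℝ)
    (hM : ∀ᵐ ω ∂μ, Tendsto (fun n : ℕ => walkPos η n ω / aSeq p n - s) atTop (nhds (M ω))) :
    ∫ ω, (M ω) ^ 2 ∂μ = 2 * s * Real.Gamma (1 + p) ^ 2 / Real.Gamma (1 + 2 * p) - s ^ 2 := by
  classical
  obtain ⟨hs0, hs1⟩ := hs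
  have hp : (0:ℝ) < p := lt_trans (by norm_num) hp0
  set X : ℕ → Ω → ℝ := walkPos η with hXdef
  set a : ℕ → ℝ := aSeq p with hadef
  set b : ℕ → ℝ := aSeq (2*p) with hbdef
  set F : ℕ → MeasurableSpace Ω :=
    fun n => ⨆ i ∈ Finset.Icc 1 n, MeasurableSpace.comap (η i) inferInstance with hFdef
  have hF : ∀ n, F n ≤ ‹MeasurableSpace Ω› := by
    intro n
    exact iSup₂_le fun i _ => (hrw.meas i).comap_le
  have hFmono : ∀ {n m : ℕ}, n ≤ m → F n ≤ F m := by
    intro n m hnm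
    refine biSup_mono fun i hi => ?_
    simp only [Finset.mem_Icc] at hi ⊢
    omega
  have hηF : ∀ {i n : ℕ}, i ∈ Finset.Icc 1 n → Measurable[F n] (η i) := by
    intro i n hi
    have h0 : Measurable[MeasurableSpace.comap (η i) inferInstance] (η i) :=
      measurable_iff_comap_le.mpr le_rfl
    exact h0.mono (le_iSup₂ (f := fun i (_ : i ∈ Finset.Icc 1 n) =>
      MeasurableSpace.comap (η i) inferInstance) i hi) le_rfl
  have hXF : ∀ n, Measurable[F n] (X n) := by
    intro n
    exact Finset.measurable_sum _ fun i hi => hηF hi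
  have hXm : ∀ n, Measurable (X n) := fun n => (hXF n).mono (hF n) le_rfl
  -- bounds
  have hη01 : ∀ i : ℕ, ∀ᵐ ω ∂μ, 0 ≤ η i ω ∧ η i ω ≤ 1 := by
    intro i
    rcases Nat.eq_zero_or_pos i with h | h
    · subst h
      filter_upwards with ω
      simp [hrw.zero ω]
    · filter_upwards [hrw.vals i h] with ω hω
      rcases hω with h' | h' <;> simp [h']
  have hηall : ∀ᵐ ω ∂μ, ∀ i : ℕ, 0 ≤ η i ω ∧ η i ω ≤ 1 := ae_all_iff.2 hη01
  have hXbd : ∀ n : ℕ, ∀ᵐ ω ∂μ, |X n ω| ≤ n := by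
    intro n
    filter_upwards [hηall] with ω hω
    have h1 : X n ω ≤ ∑ k ∈ Finset.Icc 1 n, (1:ℝ) :=
      Finset.sum_le_sum fun i _ => (hω i).2
    have h2 : (0:ℝ) ≤ X n ω := Finset.sum_nonneg fun i _ => (hω i).1
    rw [abs_of_nonneg h2]
    calc X n ω ≤ ∑ k ∈ Finset.Icc 1 n, (1:ℝ) := h1
      _ = n := by simp
  have hbdd : ∀ (f : Ω → ℝ) (C : ℝ), AEStronglyMeasurable f μ →
      (∀ᵐ ω ∂μ, |f ω| ≤ C) → Integrable f μ := by
    intro f C hm hb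
    exact (integrable_const C).mono' hm (by simpa [Real.norm_eq_abs] using hb)
  have hIntη : ∀ i, Integrable (η i) μ := fun i =>
    hbdd _ 1 (hrw.meas i).aestronglyMeasurable
      (by filter_upwards [hη01 i] with ω h; rw [abs_le]; constructor <;> linarith [h.1, h.2])
  have hIntX : ∀ n, Integrable (X n) μ := fun n =>
    hbdd _ n (hXm n).aestronglyMeasurable (hXbd n)
  -- the key consequence of the conditional expectation hypothesis
  have hkey : ∀ n : ℕ, 1 ≤ n → ∀ (f : Ω → ℝ) (C : ℝ), StronglyMeasurable[F n] f →
      (∀ᵐ ω ∂μ, |f ω| ≤ C) →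
      ∫ ω, f ω * η (n+1) ω ∂μ = (p / n) * ∫ ω, f ω * X n ω ∂μ := by
    intro n hn f C hfm hfb
    have hfma : AEStronglyMeasurable f μ :=
      (hfm.mono (hF n)).aestronglyMeasurable
    have hfη : Integrable (fun ω => f ω * η (n+1) ω) μ := by
      refine hbdd _ (|C| * 1) (hfma.mul (hrw.meas (n+1)).aestronglyMeasurable) ?_
      filter_upwards [hfb, hη01 (n+1)] with ω h1 h2
      rw [abs_mul]
      exact mul_le_mul (le_trans h1 (le_abs_self C)) (abs_le.2 ⟨by linarith [h2.1], h2.2⟩)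
        (abs_nonneg _) (abs_nonneg _)
    have h1 : ∫ ω, (μ[fun ω => f ω * η (n+1) ω | F n]) ω ∂μ
        = ∫ ω, f ω * η (n+1) ω ∂μ := integral_condExp (hF n)
    have h2 : μ[fun ω => f ω * η (n+1) ω | F n] =ᵐ[μ] fun ω => f ω * (μ[η (n+1) | F n]) ω := by
      have := condExp_stronglyMeasurable_mul_of_bound (hF n) hfm (hIntη (n+1)) C
        (by simpa [Real.norm_eq_abs] using hfb)
      exact this
    have h3 : μ[η (n+1) | F n] =ᵐ[μ] fun ω => 0 + (p - 0) * (X n ω) / n := hrw.cond n hn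
    have hc : ∫ ω, f ω * η (n+1) ω ∂μ = ∫ ω, f ω * (p * X n ω / n) ∂μ := by
      rw [← h1]
      refine integral_congr_ae ?_
      filter_upwards [h2, h3] with ω hω2 hω3
      rw [hω2, hω3]
      ring_nf
    rw [hc]
    rw [← integral_const_mul]
    refine integral_congr_ae (Eventually.of_forall fun ω => ?_)
    ring
  -- integral of η 1
  have hmo : ∫ ω, η 1 ω ∂μ = s := by
    have hmeasset : MeasurableSet {ω | η 1 ω = 1} :=
      (hrw.meas 1) (measurableSet_singleton 1)
    have hae : η 1 =ᵐ[μ] Set.indicator {ω | η 1 ω = 1} (fun _ => (1:ℝ)) := by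
      filter_upwards [hrw.vals 1 le_rfl] with ω hω
      rcases hω with h | h <;>
        simp [Set.indicator_apply, Set.mem_setOf_eq, h]
    rw [integral_congr_ae hae, integral_indicator_const (1:ℝ) hmeasset, smul_eq_mul, mul_one,
      ]
    exact hrw.init
  -- basic sequence facts
  have hapos : ∀ {n : ℕ}, 1 ≤ n → 0 < a n := fun {n} hn => aSeq_pos hp hn
  have hbpos : ∀ {n : ℕ}, 1 ≤ n → 0 < b n := fun {n} hn => aSeq_pos (by positivity) hn
  have ha1 : a 1 = 1 := aSeq_one_eq hp
  have hb1 : b 1 = 1 := aSeq_one_eq (by positivity : (0:ℝ) < 2*p)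
  have hasucc : ∀ {n : ℕ}, 1 ≤ n → a (n+1) = a n * (((n:ℝ) + p) / n) :=
    fun {n} hn => aSeq_succ_eq hp hn
  have hbsucc : ∀ {n : ℕ}, 1 ≤ n → b (n+1) = b n * (((n:ℝ) + 2*p) / n) :=
    fun {n} hn => aSeq_succ_eq (by positivity : (0:ℝ) < 2*p) hn
  have hX1 : X 1 = η 1 := by
    funext ω
    simp [hXdef, walkPos]
  have hXsucc : ∀ n : ℕ, 1 ≤ n → ∀ ω, X (n+1) ω = X n ω + η (n+1) ω := by
    intro n hn ω
    simp only [hXdef, walkPos]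
    rw [← Finset.sum_Icc_succ_top (by omega : 1 ≤ n + 1)]
  -- first moment
  have momX : ∀ n : ℕ, 1 ≤ n → ∫ ω, X n ω ∂μ = s * a n := by
    intro n hn
    induction n, hn using Nat.le_induction with
    | base =>
      rw [hX1, hmo, ha1, mul_one]
    | succ n hn ih =>
      have hint : ∫ ω, η (n+1) ω ∂μ = (p / n) * ∫ ω, X n ω ∂μ := by
        have := hkey n hn (fun _ => (1:ℝ)) 1 stronglyMeasurable_const
          (Eventually.of_forall fun ω => by norm_num)
        simpa using this
      have hsum : ∫ ω, X (n+1) ω ∂μ = ∫ ω, X n ω ∂μ + ∫ ω, η (n+1) ω ∂μ := by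
        rw [← integral_add (hIntX n) (hIntη (n+1))]
        refine integral_congr_ae (Eventually.of_forall fun ω => hXsucc n hn ω)
      have hn' : (0:ℝ) < n := by exact_mod_cast hn
      rw [hsum, hint, ih, hasucc hn]
      field_simp
  -- second moment
  have hIntX2 : ∀ n, Integrable (fun ω => X n ω ^ 2) μ := by
    intro n
    refine hbdd _ ((n:ℝ)^2) (((hXm n).pow_const 2).aestronglyMeasurable) ?_
    filter_upwards [hXbd n] with ω h
    calc |X n ω ^ 2| = |X n ω|^2 := by rw [abs_pow]
      _ ≤ (n:ℝ)^2 := by gcongr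
  have hIntXmul : ∀ n m, Integrable (fun ω => X n ω * X m ω) μ := by
    intro n m
    refine hbdd _ ((n:ℝ)*m) (((hXm n).mul (hXm m)).aestronglyMeasurable) ?_
    filter_upwards [hXbd n, hXbd m] with ω h1 h2
    rw [abs_mul]
    exact mul_le_mul h1 h2 (abs_nonneg _) (Nat.cast_nonneg n)
  have hIntXη : ∀ n m, Integrable (fun ω => X n ω * η m ω) μ := by
    intro n m
    refine hbdd _ ((n:ℝ)*1) (((hXm n).mul (hrw.meas m)).aestronglyMeasurable) ?_
    filter_upwards [hXbd n, hη01 m] with ω h1 h2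
    rw [abs_mul]
    exact mul_le_mul h1 (abs_le.2 ⟨by linarith [h2.1], h2.2⟩) (abs_nonneg _) (Nat.cast_nonneg n)
  have hηsq : ∀ m : ℕ, 1 ≤ m → ∀ᵐ ω ∂μ, η m ω ^ 2 = η m ω := by
    intro m hm
    filter_upwards [hrw.vals m hm] with ω hω
    rcases hω with h | h <;> rw [h] <;> norm_num
  have momX2 : ∀ n : ℕ, 1 ≤ n → ∫ ω, X n ω ^ 2 ∂μ = s * (2 * b n - a n) := by
    intro n hn
    induction n, hn using Nat.le_induction with
    | base =>
      have h1 : ∀ᵐ ω ∂μ, X 1 ω ^ 2 = η 1 ω := by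
        filter_upwards [hηsq 1 le_rfl] with ω hω
        rw [hX1]; exact hω
      rw [integral_congr_ae h1, hmo, ha1, hb1]
      ring
    | succ n hn ih =>
      have hcrossInt : ∫ ω, X n ω * η (n+1) ω ∂μ = (p / n) * ∫ ω, X n ω ^ 2 ∂μ := by
        have h := hkey n hn (X n) n (hXF n).stronglyMeasurable (hXbd n)
        rw [h]
        congr 1
        refine integral_congr_ae (Eventually.of_forall fun ω => ?_)
        ring
      have hηint : ∫ ω, η (n+1) ω ∂μ = (p / n) * ∫ ω, X n ω ∂μ := by
        have := hkey n hn (fun _ => (1:ℝ)) 1 stronglyMeasurable_const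
          (Eventually.of_forall fun ω => by norm_num)
        simpa using this
      have hexp : ∫ ω, X (n+1) ω ^ 2 ∂μ
          = ∫ ω, X n ω ^ 2 ∂μ + 2 * ∫ ω, X n ω * η (n+1) ω ∂μ + ∫ ω, η (n+1) ω ∂μ := by
        have heq : ∀ᵐ ω ∂μ, X (n+1) ω ^ 2
            = X n ω ^ 2 + 2 * (X n ω * η (n+1) ω) + η (n+1) ω := by
          filter_upwards [hηsq (n+1) (by omega)] with ω hω
          rw [hXsucc n hn ω]
          nlinarith [hω]
        rw [integral_congr_ae heq]
        have i1 : Integrable (fun ω => X n ω ^ 2 + 2 * (X n ω * η (n+1) ω)) μ :=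
          (hIntX2 n).add ((hIntXη n (n+1)).const_mul 2)
        have e1 : ∫ ω, (X n ω ^ 2 + 2 * (X n ω * η (n+1) ω)) + η (n+1) ω ∂μ
            = (∫ ω, X n ω ^ 2 + 2 * (X n ω * η (n+1) ω) ∂μ) + ∫ ω, η (n+1) ω ∂μ :=
          integral_add i1 (hIntη (n+1))
        have e2 : ∫ ω, X n ω ^ 2 + 2 * (X n ω * η (n+1) ω) ∂μ
            = (∫ ω, X n ω ^ 2 ∂μ) + ∫ ω, 2 * (X n ω * η (n+1) ω) ∂μ :=
          integral_add (hIntX2 n) ((hIntXη n (n+1)).const_mul 2)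
        rw [e1, e2, integral_const_mul]
      have hn' : (0:ℝ) < n := by exact_mod_cast hn
      have hn0 : (n:ℝ) ≠ 0 := ne_of_gt hn'
      rw [hexp, hcrossInt, hηint, ih, momX n hn, hasucc hn, hbsucc hn]
      field_simp
      ring
  -- cross moments
  have cross : ∀ n : ℕ, 1 ≤ n → ∀ m : ℕ, n ≤ m →
      ∫ ω, X n ω * X m ω ∂μ = (∫ ω, X n ω ^ 2 ∂μ) * (a m / a n) := by
    intro n hn m hm
    induction m, hm using Nat.le_induction with
    | base =>
      rw [div_self (ne_of_gt (hapos hn)), mul_one]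
      refine integral_congr_ae (Eventually.of_forall fun ω => ?_)
      ring
    | succ m hm ih =>
      have hm1 : 1 ≤ m := le_trans hn hm
      have hXnFm : StronglyMeasurable[F m] (X n) :=
        ((hXF n).mono (hFmono hm) le_rfl).stronglyMeasurable
      have h := hkey m hm1 (X n) n hXnFm (hXbd n)
      have hsum : ∫ ω, X n ω * X (m+1) ω ∂μ
          = ∫ ω, X n ω * X m ω ∂μ + ∫ ω, X n ω * η (m+1) ω ∂μ := by
        rw [← integral_add (hIntXmul n m) (hIntXη n (m+1))]
        refine integral_congr_ae (Eventually.of_forall fun ω => ?_)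
        show X n ω * X (m+1) ω = X n ω * X m ω + X n ω * η (m+1) ω
        rw [hXsucc m hm1 ω]
        ring
      have hm' : (0:ℝ) < m := by exact_mod_cast hm1
      have hm0 : (m:ℝ) ≠ 0 := ne_of_gt hm'
      have hcomm : ∫ ω, X m ω * X n ω ∂μ = ∫ ω, X n ω * X m ω ∂μ :=
        integral_congr_ae (Eventually.of_forall fun ω => mul_comm _ _)
      rw [hsum, h, ih, hasucc hm1]
      field_simp [hm0, ne_of_gt (hapos hn)]
  -- the normalized process
  set Y : ℕ → Ω → ℝ := fun n ω => X n ω / a n with hYdef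
  set v : ℕ → ℝ := fun n => s * (2 * b n - a n) / (a n)^2 with hvdef
  set V : ℝ := 2 * s * Real.Gamma (1 + p) ^ 2 / Real.Gamma (1 + 2 * p) with hVdef
  have hYm : ∀ n, Measurable (Y n) := fun n => (hXm n).div_const _
  have hYbd : ∀ n : ℕ, 1 ≤ n → ∀ᵐ ω ∂μ, |Y n ω| ≤ n / a n := by
    intro n hn
    filter_upwards [hXbd n] with ω h
    rw [hYdef]
    simp only
    rw [abs_div, abs_of_pos (hapos hn)]
    gcongr
    exact le_of_lt (hapos hn)
  -- integrals of the normalized process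
  have hIntY : ∀ n, Integrable (Y n) μ := fun n => (hIntX n).div_const (a n)
  have hIntYsq : ∀ n, Integrable (fun ω => Y n ω ^ 2) μ := by
    intro n
    refine ((hIntX2 n).div_const ((a n)^2)).congr (Eventually.of_forall fun ω => ?_)
    simp [hYdef, div_pow]
  have hIntYmul : ∀ n m, Integrable (fun ω => Y n ω * Y m ω) μ := by
    intro n m
    refine ((hIntXmul n m).div_const (a n * a m)).congr (Eventually.of_forall fun ω => ?_)
    simp [hYdef, div_mul_div_comm]
  have hYsq : ∀ n : ℕ, 1 ≤ n → ∫ ω, Y n ω ^ 2 ∂μ = v n := by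
    intro n hn
    have h1 : ∫ ω, Y n ω ^ 2 ∂μ = (∫ ω, X n ω ^ 2 ∂μ) / (a n)^2 := by
      rw [← integral_div]
      exact integral_congr_ae (Eventually.of_forall fun ω => by simp [hYdef, div_pow])
    rw [h1, momX2 n hn]
  have hYone : ∀ n : ℕ, 1 ≤ n → ∫ ω, Y n ω ∂μ = s := by
    intro n hn
    have h1 : ∫ ω, Y n ω ∂μ = (∫ ω, X n ω ∂μ) / a n := integral_div _ _
    rw [h1, momX n hn, mul_div_assoc, div_self (ne_of_gt (hapos hn)), mul_one]
  have hYmul : ∀ n m : ℕ, 1 ≤ n → n ≤ m → ∫ ω, Y n ω * Y m ω ∂μ = v n := by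
    intro n m hn hm
    have hm1 : 1 ≤ m := le_trans hn hm
    have h1 : ∫ ω, Y n ω * Y m ω ∂μ = (∫ ω, X n ω * X m ω ∂μ) / (a n * a m) := by
      rw [← integral_div]
      exact integral_congr_ae (Eventually.of_forall fun ω => by simp [hYdef, div_mul_div_comm])
    rw [h1, cross n hn m hm, momX2 n hn, hvdef]
    have h2 : a n ≠ 0 := ne_of_gt (hapos hn)
    have h3 : a m ≠ 0 := ne_of_gt (hapos hm1)
    field_simp
  have hIntYdiff : ∀ n m : ℕ, Integrable (fun ω => (Y m ω - Y n ω)^2) μ := by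
    intro n m
    have i1 : Integrable (fun ω => Y m ω^2 - 2*(Y n ω * Y m ω) + Y n ω^2) μ :=
      ((hIntYsq m).sub ((hIntYmul n m).const_mul 2)).add (hIntYsq n)
    exact i1.congr (Eventually.of_forall fun ω => by ring)
  have hdiff : ∀ n m : ℕ, 1 ≤ n → n ≤ m → ∫ ω, (Y m ω - Y n ω)^2 ∂μ = v m - v n := by
    intro n m hn hm
    have hm1 : 1 ≤ m := le_trans hn hm
    calc ∫ ω, (Y m ω - Y n ω)^2 ∂μ
        = ∫ ω, (Y m ω ^2 + Y n ω ^2) - 2*(Y n ω * Y m ω) ∂μ :=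
          integral_congr_ae (Eventually.of_forall fun ω => by ring)
      _ = (∫ ω, Y m ω ^2 + Y n ω ^2 ∂μ) - ∫ ω, 2*(Y n ω * Y m ω) ∂μ :=
          integral_sub ((hIntYsq m).add (hIntYsq n)) ((hIntYmul n m).const_mul 2)
      _ = v m - v n := by
          rw [integral_add (hIntYsq m) (hIntYsq n), integral_const_mul,
            hYsq m hm1, hYsq n hn, hYmul n m hn hm]
          ring
  -- convergence of the second moments
  have hvV : Tendsto v atTop (nhds V) := by
    have h1 : Tendsto (fun n : ℕ => b n / (a n)^2) atTop
        (nhds (Real.Gamma (1+p)^2 / Real.Gamma (1+2*p))) := tendsto_ratio_aSeq hp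
    have h2 : Tendsto (fun n : ℕ => 1 / a n) atTop (nhds 0) := tendsto_inv_aSeq hp
    have h3 : Tendsto (fun n : ℕ => 2*s*(b n/(a n)^2) - s*(1/a n)) atTop
        (nhds (2*s*(Real.Gamma (1+p)^2 / Real.Gamma (1+2*p)) - s*0)) :=
      (h1.const_mul (2*s)).sub (h2.const_mul s)
    have h4 : 2*s*(Real.Gamma (1+p)^2 / Real.Gamma (1+2*p)) - s*0 = V := by
      rw [hVdef]; ring
    rw [h4] at h3
    refine Tendsto.congr' ?_ h3
    filter_upwards [eventually_ge_atTop 1] with n hn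
    have h5 : a n ≠ 0 := ne_of_gt (hapos hn)
    rw [hvdef]
    field_simp
  have hmono : ∀ n m : ℕ, 1 ≤ n → n ≤ m → v n ≤ v m := by
    intro n m hn hm
    have h1 := hdiff n m hn hm
    have h2 : (0:ℝ) ≤ ∫ ω, (Y m ω - Y n ω)^2 ∂μ := integral_nonneg fun ω => sq_nonneg _
    linarith
  have hvle : ∀ n : ℕ, 1 ≤ n → v n ≤ V := by
    intro n hn
    refine ge_of_tendsto hvV ?_
    filter_upwards [eventually_ge_atTop n] with m hm
    exact hmono n m hn hm
  have hv0 : ∀ n : ℕ, 1 ≤ n → 0 ≤ v n := by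
    intro n hn
    rw [← hYsq n hn]
    exact integral_nonneg fun ω => sq_nonneg _
  have hVpos : 0 ≤ V := le_trans (hv0 1 le_rfl) (hvle 1 le_rfl)
  -- the limit function
  set L : Ω → ℝ := fun ω => M ω + s with hLdef
  have hLtend : ∀ᵐ ω ∂μ, Tendsto (fun n => Y n ω) atTop (nhds (L ω)) := by
    filter_upwards [hM] with ω h
    have h2 : Tendsto (fun n : ℕ => X n ω / a n - s + s) atTop (nhds (M ω + s)) :=
      h.add_const s
    have h3 : (fun n : ℕ => X n ω / a n - s + s) = fun n : ℕ => X n ω / a n := by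
      funext n; ring
    rw [h3] at h2
    exact h2
  have hLaem : AEMeasurable L μ :=
    aemeasurable_of_tendsto_metrizable_ae' (fun n => (hYm n).aemeasurable) hLtend
  have hLaesm : AEStronglyMeasurable L μ := hLaem.aestronglyMeasurable
  -- Fatou argument
  have hfatou : ∀ n : ℕ, 1 ≤ n → Integrable (fun ω => (L ω - Y n ω)^2) μ ∧
      ∫ ω, (L ω - Y n ω)^2 ∂μ ≤ V - v n := by
    intro n hn
    have haesm : AEStronglyMeasurable (fun ω => (L ω - Y n ω)^2) μ :=
      ((hLaem.sub (hYm n).aemeasurable).pow_const 2).aestronglyMeasurable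
    have hmeas_m : ∀ m, Measurable (fun ω => ENNReal.ofReal ((Y m ω - Y n ω)^2)) := fun m =>
      ENNReal.measurable_ofReal.comp (((hYm m).sub (hYm n)).pow_const 2)
    have htd : ∀ᵐ ω ∂μ, Tendsto (fun m => ENNReal.ofReal ((Y m ω - Y n ω)^2)) atTop
        (nhds (ENNReal.ofReal ((L ω - Y n ω)^2))) := by
      filter_upwards [hLtend] with ω hω
      exact (ENNReal.continuous_ofReal.tendsto _).comp ((hω.sub_const (Y n ω)).pow 2)
    have hlim1 : ∫⁻ ω, ENNReal.ofReal ((L ω - Y n ω)^2) ∂μ ≤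
        Filter.liminf (fun m => ∫⁻ ω, ENNReal.ofReal ((Y m ω - Y n ω)^2) ∂μ) atTop := by
      have heq : ∫⁻ ω, ENNReal.ofReal ((L ω - Y n ω)^2) ∂μ
          = ∫⁻ ω, Filter.liminf (fun m => ENNReal.ofReal ((Y m ω - Y n ω)^2)) atTop ∂μ := by
        refine lintegral_congr_ae ?_
        filter_upwards [htd] with ω hω
        exact hω.liminf_eq.symm
      rw [heq]
      exact lintegral_liminf_le hmeas_m
    have hval : ∀ᶠ m in atTop, (fun m => ∫⁻ ω, ENNReal.ofReal ((Y m ω - Y n ω)^2) ∂μ) m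
        = ENNReal.ofReal (v m - v n) := by
      filter_upwards [eventually_ge_atTop n] with m hm
      rw [← ofReal_integral_eq_lintegral_ofReal (hIntYdiff n m)
        (Eventually.of_forall fun ω => sq_nonneg _), hdiff n m hn hm]
    have hlimv : Tendsto (fun m => ∫⁻ ω, ENNReal.ofReal ((Y m ω - Y n ω)^2) ∂μ) atTop
        (nhds (ENNReal.ofReal (V - v n))) := by
      refine Tendsto.congr' (hval.mono fun m hm => hm.symm) ?_
      exact (ENNReal.continuous_ofReal.tendsto _).comp (hvV.sub_const (v n))
    have hkey2 : ∫⁻ ω, ENNReal.ofReal ((L ω - Y n ω)^2) ∂μ ≤ ENNReal.ofReal (V - v n) := by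
      calc ∫⁻ ω, ENNReal.ofReal ((L ω - Y n ω)^2) ∂μ
          ≤ Filter.liminf (fun m => ∫⁻ ω, ENNReal.ofReal ((Y m ω - Y n ω)^2) ∂μ) atTop := hlim1
        _ = ENNReal.ofReal (V - v n) := hlimv.liminf_eq
    have hint : Integrable (fun ω => (L ω - Y n ω)^2) μ := by
      refine ⟨haesm, ?_⟩
      rw [hasFiniteIntegral_iff_ofReal (Eventually.of_forall fun ω => sq_nonneg _)]
      exact lt_of_le_of_lt hkey2 ENNReal.ofReal_lt_top
    refine ⟨hint, ?_⟩
    rw [integral_eq_lintegral_of_nonneg_ae (Eventually.of_forall fun ω => sq_nonneg _) haesm]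
    calc (∫⁻ ω, ENNReal.ofReal ((L ω - Y n ω)^2) ∂μ).toReal
        ≤ (ENNReal.ofReal (V - v n)).toReal :=
          ENNReal.toReal_mono ENNReal.ofReal_ne_top hkey2
      _ = V - v n := ENNReal.toReal_ofReal (by linarith [hvle n hn])
  -- the second moment of L
  have hIntLY : ∀ n : ℕ, 1 ≤ n → Integrable (fun ω => (L ω - Y n ω) * Y n ω) μ := by
    intro n hn
    have gInt : Integrable (fun ω => (L ω - Y n ω)^2 + Y n ω^2) μ :=
      (hfatou n hn).1.add (hIntYsq n)
    refine gInt.mono'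
      ((hLaem.sub (hYm n).aemeasurable).mul (hYm n).aemeasurable).aestronglyMeasurable ?_
    refine Eventually.of_forall fun ω => ?_
    show ‖(L ω - Y n ω) * Y n ω‖ ≤ (L ω - Y n ω)^2 + Y n ω^2
    set x := L ω - Y n ω
    set y := Y n ω
    have h1 := sq_nonneg (|x| - |y|)
    have h2 := abs_nonneg x
    have h3 := abs_nonneg y
    have h4 : |x|^2 = x^2 := sq_abs x
    have h5 : |y|^2 = y^2 := sq_abs y
    rw [Real.norm_eq_abs, abs_mul]
    nlinarith
  have hIntL2 : Integrable (fun ω => L ω ^ 2) μ := by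
    have h1 : (fun ω => L ω ^ 2)
        = fun ω => (L ω - Y 1 ω)^2 + 2*((L ω - Y 1 ω) * Y 1 ω) + Y 1 ω ^2 := by
      funext ω; ring
    rw [h1]
    exact (((hfatou 1 le_rfl).1.add ((hIntLY 1 le_rfl).const_mul 2)).add (hIntYsq 1))
  have hIntLYn : ∀ n : ℕ, 1 ≤ n → Integrable (fun ω => L ω - Y n ω) μ := by
    intro n hn
    have gInt : Integrable (fun ω => (L ω - Y n ω)^2 + 1) μ :=
      (hfatou n hn).1.add (integrable_const 1)
    refine gInt.mono' (hLaem.sub (hYm n).aemeasurable).aestronglyMeasurable ?_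
    refine Eventually.of_forall fun ω => ?_
    show ‖L ω - Y n ω‖ ≤ (L ω - Y n ω)^2 + 1
    set x := L ω - Y n ω
    have h1 := sq_nonneg (|x| - 1)
    have h4 : |x|^2 = x^2 := sq_abs x
    have h2 := abs_nonneg x
    rw [Real.norm_eq_abs]
    nlinarith
  have hIntL : Integrable L μ := by
    have h1 : L = fun ω => (L ω - Y 1 ω) + Y 1 ω := by funext ω; ring
    rw [h1]
    exact (hIntLYn 1 le_rfl).add (hIntY 1)
  -- second moment identity
  have hL2 : ∫ ω, L ω ^ 2 ∂μ = V := by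
    have hABC : ∀ n : ℕ, 1 ≤ n → ∀ t : ℝ, 0 < t →
        |(∫ ω, L ω ^ 2 ∂μ) - v n| ≤ (1 + t) * (V - v n) + V / t := by
      intro n hn t ht
      obtain ⟨hInt1, hBnd⟩ := hfatou n hn
      have hsplit : ∫ ω, L ω ^ 2 ∂μ
          = (∫ ω, (L ω - Y n ω)^2 ∂μ) + 2 * (∫ ω, (L ω - Y n ω) * Y n ω ∂μ) + v n := by
        have h1 : ∫ ω, L ω ^ 2 ∂μ
            = ∫ ω, ((L ω - Y n ω)^2 + 2*((L ω - Y n ω) * Y n ω)) + Y n ω^2 ∂μ :=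
          integral_congr_ae (Eventually.of_forall fun ω => by ring)
        have i1 : Integrable (fun ω => (L ω - Y n ω)^2 + 2*((L ω - Y n ω) * Y n ω)) μ :=
          hInt1.add ((hIntLY n hn).const_mul 2)
        have e1 : ∫ ω, ((L ω - Y n ω)^2 + 2*((L ω - Y n ω) * Y n ω)) + Y n ω^2 ∂μ
            = (∫ ω, (L ω - Y n ω)^2 + 2*((L ω - Y n ω) * Y n ω) ∂μ) + ∫ ω, Y n ω^2 ∂μ :=
          integral_add i1 (hIntYsq n)
        have e2 : ∫ ω, (L ω - Y n ω)^2 + 2*((L ω - Y n ω) * Y n ω) ∂μ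
            = (∫ ω, (L ω - Y n ω)^2 ∂μ) + ∫ ω, 2*((L ω - Y n ω) * Y n ω) ∂μ :=
          integral_add hInt1 ((hIntLY n hn).const_mul 2)
        rw [h1, e1, e2, integral_const_mul, hYsq n hn]
      have hprodInt : Integrable (fun ω => |L ω - Y n ω| * |Y n ω|) μ :=
        (hIntLY n hn).abs.congr (Eventually.of_forall fun ω => by simp [abs_mul])
      have iR : Integrable (fun ω => (t * (L ω - Y n ω)^2 + Y n ω^2 / t) / 2) μ :=
        ((hInt1.const_mul t).add ((hIntYsq n).div_const t)).div_const 2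
      have hprodbd : |∫ ω, (L ω - Y n ω) * Y n ω ∂μ| ≤ (t * (V - v n) + V / t) / 2 := by
        have h2 : |∫ ω, (L ω - Y n ω) * Y n ω ∂μ| ≤ ∫ ω, |L ω - Y n ω| * |Y n ω| ∂μ := by
          simpa [Real.norm_eq_abs, abs_mul] using
            norm_integral_le_integral_norm (μ := μ) (fun ω => (L ω - Y n ω) * Y n ω)
        have h3 : ∫ ω, |L ω - Y n ω| * |Y n ω| ∂μ
            ≤ ∫ ω, (t * (L ω - Y n ω)^2 + Y n ω^2 / t) / 2 ∂μ := by
          refine integral_mono hprodInt iR fun ω => ?_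
          set x := L ω - Y n ω
          set y := Y n ω
          have key : 0 ≤ t^2*x^2 + y^2 - 2*t*(|x| * |y|) := by
            nlinarith [sq_nonneg (t*|x| - |y|), sq_abs x, sq_abs y]
          have expand : (t * x^2 + y^2/t)/2 - |x| * |y|
              = (t^2*x^2 + y^2 - 2*t*(|x| * |y|)) / (2*t) := by
            field_simp
          have hnn2 : 0 ≤ (t * x^2 + y^2/t)/2 - |x| * |y| :=
            expand ▸ div_nonneg key (by positivity)
          linarith
        have h4 : ∫ ω, (t * (L ω - Y n ω)^2 + Y n ω^2 / t) / 2 ∂μ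
            = (t * (∫ ω, (L ω - Y n ω)^2 ∂μ) + (∫ ω, Y n ω ^2 ∂μ) / t) / 2 := by
          rw [integral_div, integral_add (hInt1.const_mul t) ((hIntYsq n).div_const t),
            integral_const_mul, integral_div]
        have h5 : t * (∫ ω, (L ω - Y n ω)^2 ∂μ) ≤ t * (V - v n) :=
          mul_le_mul_of_nonneg_left hBnd (le_of_lt ht)
        have h6 : (∫ ω, Y n ω ^2 ∂μ) / t ≤ V / t := by
          rw [hYsq n hn]
          gcongr
          exact hvle n hn
        calc |∫ ω, (L ω - Y n ω) * Y n ω ∂μ| ≤ ∫ ω, |L ω - Y n ω| * |Y n ω| ∂μ := h2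
          _ ≤ ∫ ω, (t * (L ω - Y n ω)^2 + Y n ω^2 / t) / 2 ∂μ := h3
          _ = (t * (∫ ω, (L ω - Y n ω)^2 ∂μ) + (∫ ω, Y n ω ^2 ∂μ) / t) / 2 := h4
          _ ≤ (t * (V - v n) + V / t) / 2 := by linarith
      have hnn : 0 ≤ ∫ ω, (L ω - Y n ω)^2 ∂μ := integral_nonneg fun ω => sq_nonneg _
      have hVv : 0 ≤ V - v n := by linarith [hvle n hn]
      have habs := abs_le.1 hprodbd
      rw [hsplit, abs_le]
      constructor
      · linarith [habs.1, habs.2]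
      · linarith [habs.1, habs.2]
    have htend0 : Tendsto (fun n : ℕ => V - v n) atTop (nhds 0) := by
      have h1 := hvV.const_sub V
      simpa using h1
    have hle : ∀ t : ℝ, 0 < t → |(∫ ω, L ω ^ 2 ∂μ) - V| ≤ V / t := by
      intro t ht
      have h1 : Tendsto (fun n : ℕ => (1 + t) * (V - v n) + V / t + (V - v n)) atTop
          (nhds ((1 + t) * 0 + V / t + 0)) :=
        ((htend0.const_mul (1 + t)).add_const (V / t)).add htend0
      have h2 : ∀ᶠ n in atTop,
          |(∫ ω, L ω ^ 2 ∂μ) - V| ≤ (1 + t) * (V - v n) + V / t + (V - v n) := by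
        filter_upwards [eventually_ge_atTop 1] with n hn
        have h3 := hABC n hn t ht
        have h4 : |(∫ ω, L ω ^ 2 ∂μ) - V| ≤ |(∫ ω, L ω ^ 2 ∂μ) - v n| + |v n - V| :=
          abs_sub_le _ _ _
        have h5 : |v n - V| = V - v n := by
          rw [abs_sub_comm, abs_of_nonneg (by linarith [hvle n hn])]
        linarith
      have h6 := ge_of_tendsto h1 h2
      linarith [h6]
    have heps : ∀ ε : ℝ, 0 < ε → |(∫ ω, L ω ^ 2 ∂μ) - V| ≤ ε := by
      intro ε hε
      have ht : (0:ℝ) < V / ε + 1 := by positivity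
      have h1 := hle (V / ε + 1) ht
      have h2 : V / (V / ε + 1) ≤ ε := by
        rw [div_le_iff₀ ht]
        have : ε * (V / ε) = V := by field_simp
        nlinarith
      linarith
    by_contra hne
    have hpos : 0 < |(∫ ω, L ω ^ 2 ∂μ) - V| := by
      rcases lt_or_gt_of_ne (sub_ne_zero.mpr hne) with h | h
      · exact abs_pos.mpr (ne_of_lt h)
      · exact abs_pos.mpr (ne_of_gt h)
    have := heps (|(∫ ω, L ω ^ 2 ∂μ) - V| / 2) (by linarith)
    linarith
  -- the first moment of L
  have hL1 : ∫ ω, L ω ∂μ = s := by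
    have hABC : ∀ n : ℕ, 1 ≤ n → ∀ t : ℝ, 0 < t →
        |(∫ ω, L ω ∂μ) - s| ≤ (t + (V - v n) / t) / 2 := by
      intro n hn t ht
      obtain ⟨hInt1, hBnd⟩ := hfatou n hn
      have hsub : ∫ ω, (L ω - Y n ω) ∂μ = (∫ ω, L ω ∂μ) - s := by
        rw [integral_sub hIntL (hIntY n), hYone n hn]
      have h2 : |∫ ω, (L ω - Y n ω) ∂μ| ≤ ∫ ω, |L ω - Y n ω| ∂μ := by
        simpa [Real.norm_eq_abs] using
          norm_integral_le_integral_norm (fun ω => L ω - Y n ω) (μ := μ)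
      have iR : Integrable (fun ω => (t + (L ω - Y n ω)^2 / t) / 2) μ :=
        ((integrable_const t).add (hInt1.div_const t)).div_const 2
      have h3 : ∫ ω, |L ω - Y n ω| ∂μ ≤ ∫ ω, (t + (L ω - Y n ω)^2 / t) / 2 ∂μ := by
        refine integral_mono (hIntLYn n hn).abs iR fun ω => ?_
        set x := L ω - Y n ω
        have key : 0 ≤ t^2 + x^2 - 2*t*|x| := by
          nlinarith [sq_nonneg (t - |x|), sq_abs x]
        have expand : (t + x^2/t)/2 - |x| = (t^2 + x^2 - 2*t*|x|) / (2*t) := by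
          field_simp
        have hnn2 : 0 ≤ (t + x^2/t)/2 - |x| := expand ▸ div_nonneg key (by positivity)
        linarith
      have h4 : ∫ ω, (t + (L ω - Y n ω)^2 / t) / 2 ∂μ
          = (t + (∫ ω, (L ω - Y n ω)^2 ∂μ) / t) / 2 := by
        rw [integral_div, integral_add (integrable_const t) (hInt1.div_const t),
          integral_div, integral_const]
        simp
      have h5 : (∫ ω, (L ω - Y n ω)^2 ∂μ) / t ≤ (V - v n) / t := by
        gcongr
      rw [← hsub]
      calc |∫ ω, (L ω - Y n ω) ∂μ| ≤ ∫ ω, |L ω - Y n ω| ∂μ := h2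
        _ ≤ ∫ ω, (t + (L ω - Y n ω)^2 / t) / 2 ∂μ := h3
        _ = (t + (∫ ω, (L ω - Y n ω)^2 ∂μ) / t) / 2 := h4
        _ ≤ (t + (V - v n) / t) / 2 := by linarith
    have htend0 : Tendsto (fun n : ℕ => V - v n) atTop (nhds 0) := by
      have h1 := hvV.const_sub V
      simpa using h1
    have hle : ∀ t : ℝ, 0 < t → |(∫ ω, L ω ∂μ) - s| ≤ t / 2 := by
      intro t ht
      have h1 : Tendsto (fun n : ℕ => (t + (V - v n) / t) / 2) atTop
          (nhds ((t + 0 / t) / 2)) := (((htend0.div_const t).const_add t).div_const 2)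
      have h2 : ∀ᶠ n in atTop, |(∫ ω, L ω ∂μ) - s| ≤ (t + (V - v n) / t) / 2 := by
        filter_upwards [eventually_ge_atTop 1] with n hn
        exact hABC n hn t ht
      have h6 := ge_of_tendsto h1 h2
      rw [zero_div, add_zero] at h6
      exact h6
    have heps : ∀ ε : ℝ, 0 < ε → |(∫ ω, L ω ∂μ) - s| ≤ ε := by
      intro ε hε
      have h1 := hle ε hε
      linarith
    by_contra hne
    have hpos : 0 < |(∫ ω, L ω ∂μ) - s| := by
      rcases lt_or_gt_of_ne (sub_ne_zero.mpr hne) with h | h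
      · exact abs_pos.mpr (ne_of_lt h)
      · exact abs_pos.mpr (ne_of_gt h)
    have := heps (|(∫ ω, L ω ∂μ) - s| / 2) (by linarith)
    linarith
  -- conclusion
  have hfinal : ∫ ω, (M ω)^2 ∂μ = ∫ ω, (L ω^2 - 2*s*L ω) + s^2 ∂μ := by
    refine integral_congr_ae (Eventually.of_forall fun ω => ?_)
    show M ω^2 = (L ω^2 - 2*s*L ω) + s^2
    have hMω : L ω = M ω + s := rfl
    rw [hMω]; ring
  have hIntA : Integrable (fun ω => L ω^2 - 2*s*L ω) μ := hIntL2.sub (hIntL.const_mul (2*s))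
  have e1 : ∫ ω, (L ω^2 - 2*s*L ω) + s^2 ∂μ
      = (∫ ω, L ω^2 - 2*s*L ω ∂μ) + ∫ (_ : Ω), s^2 ∂μ :=
    integral_add hIntA (integrable_const _)
  have e2 : ∫ ω, L ω^2 - 2*s*L ω ∂μ = (∫ ω, L ω^2 ∂μ) - ∫ ω, 2*s*L ω ∂μ :=
    integral_sub hIntL2 (hIntL.const_mul (2*s))
  have hconst : ∫ (_ : Ω), s^2 ∂μ = s^2 := by simp
  have hmul : ∫ ω, 2*s*L ω ∂μ = 2*s*s := by rw [integral_const_mul, hL1]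
  rw [hfinal, e1, e2, hL2, hconst, hmul]
  ring
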